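/- The polynomials (x²−y²)^m, (2xy)^m, (x²+y²)^m in ℂ[x,y] are linearly dependent over ℂ if and only if m = 2. -/

import Mathlib

open MvPolynomial

lemma pow_ineq : ∀ m, 3 ≤ m → 3 ^ m + 4 ^ m < 5 ^ m := by
  intro m hm
  induction m with
  | zero => omega
  | succ n ih =>
    rcases Nat.lt_or_ge n 3 with h | h
    · interval_cases n <;> revert hm <;> decide
    · have h1 := ih (by omega)
      calc 3 ^ (n+1) + 4 ^ (n+1) ≤ 4 * (3 ^ n + 4 ^ n) := by ring_nf; nlinarith [pow_pos (show 0 < 3 by norm_num) n]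
        _ < 4 * 5 ^ n := by omega
        _ < 5 ^ (n+1) := by ring_nf; nlinarith [pow_pos (show 0 < 5 by norm_num) n]

theorem stmt3 (m : ℕ) (hm : 0 < m) :
    (∃ l1 l2 l3 : ℂ, ¬(l1 = 0 ∧ l2 = 0 ∧ l3 = 0) ∧
      C l1 * ((X 0 : MvPolynomial (Fin 2) ℂ) ^ 2 - X 1 ^ 2) ^ m
        + C l2 * (2 * X 0 * X 1) ^ m
        + C l3 * (X 0 ^ 2 + X 1 ^ 2) ^ m = 0) ↔ m = 2 := by
  constructor
  · rintro ⟨l1, l2, l3, hne, heq⟩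
    have e1 := congrArg (eval ![1, 0]) heq
    have e3 := congrArg (eval ![1, 1]) heq
    have e5 := congrArg (eval ![2, 1]) heq
    simp [hm.ne', mul_pow] at e1 e3 e5
    -- e1 : l1 + l3 = 0, e3 : l2 * 2^m + l3 * 2^m = 0, e5 : l1*3^m + l2*4^m + l3*5^m = 0
    norm_num at e3 e5
    -- e3 : l2 * 2 ^ m + l3 * 2 ^ m = 0, e5 : l1 * 3 ^ m + l2 * 4 ^ m + l3 * 5 ^ m = 0
    have h2 : (2 : ℂ) ^ m ≠ 0 := pow_ne_zero _ two_ne_zero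
    have hl3 : l3 = -l1 := by linear_combination e1
    have key : (l2 + l3) * 2 ^ m = 0 := by linear_combination e3
    have hl2 : l2 = -l3 := by
      have h := (mul_eq_zero.mp key).resolve_right h2
      linear_combination h
    have hl1 : l1 ≠ 0 := by
      rintro rfl
      exact hne ⟨rfl, by rw [hl2, hl3]; ring, by rw [hl3]; ring⟩
    rw [show ((2:ℂ) ^ m * 2 ^ m) = 4 ^ m by rw [← mul_pow]; norm_num] at e5
    have key2 : l1 * (3 ^ m + 4 ^ m - 5 ^ m) = 0 := by
      linear_combination e5 - (4 : ℂ) ^ m * hl2 - ((5 : ℂ) ^ m - 4 ^ m) * hl3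
    have h3 : (3 : ℂ) ^ m + 4 ^ m = 5 ^ m := by
      have h := (mul_eq_zero.mp key2).resolve_left hl1
      linear_combination h
    have hn : 3 ^ m + 4 ^ m = 5 ^ m := by exact_mod_cast h3
    rcases Nat.lt_or_ge m 3 with h | h
    · interval_cases m <;> revert hn <;> norm_num
    · exact absurd hn (pow_ineq m h).ne
  · rintro rfl
    exact ⟨1, 1, -1, by norm_num, by push_cast [map_one, map_neg]; ring⟩
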